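/- Frame bound identity for the SGWT: with G(λ) = h(λ)² + Σ_{τ=1}^J g(t_τ λ)², the total energy of the SGWT coefficients equals Σ_l G(λ_l) f̂(l)². Consequently, if A ≤ G(λ) ≤ B on the spectrum of L, then A‖f‖² ≤ ‖h(L)f‖² + Σ_τ ‖g(t_τ L)f‖² ≤ B‖f‖². -/
import Mathlib


open Matrix

/-- Functional calculus applied to a signal, given the spectral data. -/
def specApply {N : ℕ} (lam : Fin N → ℝ) (chi : Fin N → Fin N → ℝ)
    (φ : ℝ → ℝ) (f : Fin N → ℝ) : Fin N → ℝ :=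
  fun n => ∑ l, φ (lam l) * (chi l ⬝ᵥ f) * chi l n

lemma sum_sq_expand {N : ℕ} (chi : Fin N → Fin N → ℝ)
    (horth : ∀ i j, chi i ⬝ᵥ chi j = if i = j then (1 : ℝ) else 0)
    (a : Fin N → ℝ) :
    ∑ n, (∑ l, a l * chi l n) ^ 2 = ∑ l, a l ^ 2 := by
  calc ∑ n, (∑ l, a l * chi l n) ^ 2
      = ∑ n, ∑ l, ∑ m, (a l * chi l n) * (a m * chi m n) := by
        simp [sq, Finset.sum_mul_sum]
    _ = ∑ l, ∑ m, ∑ n, (a l * chi l n) * (a m * chi m n) := by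
        rw [Finset.sum_comm]
        exact Finset.sum_congr rfl fun l _ => Finset.sum_comm ..
    _ = ∑ l, ∑ m, a l * a m * (chi l ⬝ᵥ chi m) := by
        refine Finset.sum_congr rfl fun l _ => Finset.sum_congr rfl fun m _ => ?_
        simp only [dotProduct, Finset.mul_sum]
        exact Finset.sum_congr rfl fun n _ => by ring
    _ = ∑ l, a l ^ 2 := by
        simp only [horth, mul_ite, mul_one, mul_zero]
        refine Finset.sum_congr rfl fun l _ => ?_
        rw [Finset.sum_eq_single l]
        · rw [if_pos rfl, sq]
        · intro m _ hm; rw [if_neg (Ne.symm hm)]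
        · intro hl; exact absurd (Finset.mem_univ l) hl

lemma specApply_energy {N : ℕ} (lam : Fin N → ℝ) (chi : Fin N → Fin N → ℝ)
    (horth : ∀ i j, chi i ⬝ᵥ chi j = if i = j then (1 : ℝ) else 0)
    (φ : ℝ → ℝ) (f : Fin N → ℝ) :
    ∑ n, (specApply lam chi φ f n) ^ 2
      = ∑ l, φ (lam l) ^ 2 * (chi l ⬝ᵥ f) ^ 2 := by
  have := sum_sq_expand chi horth (fun l => φ (lam l) * (chi l ⬝ᵥ f))
  simpa [specApply, mul_pow] using this

lemma parseval {N : ℕ} (chi : Fin N → Fin N → ℝ)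
    (horth : ∀ i j, chi i ⬝ᵥ chi j = if i = j then (1 : ℝ) else 0)
    (f : Fin N → ℝ) :
    ∑ n, f n ^ 2 = ∑ l, (chi l ⬝ᵥ f) ^ 2 := by
  set C : Matrix (Fin N) (Fin N) ℝ := Matrix.of chi with hC
  have h1 : C * Cᵀ = 1 := by
    ext i j
    simp only [Matrix.mul_apply, Matrix.transpose_apply, Matrix.one_apply]
    exact horth i j
  have h2 : Cᵀ * C = 1 := mul_eq_one_comm.mp h1
  have key : ∀ m n, ∑ l, chi l m * chi l n = if m = n then (1:ℝ) else 0 := by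
    intro m n
    have := congrFun (congrFun h2 m) n
    simpa [Matrix.mul_apply, Matrix.transpose_apply, Matrix.one_apply, hC] using this
  symm
  calc ∑ l, (chi l ⬝ᵥ f) ^ 2
      = ∑ l, ∑ m, ∑ n, (chi l m * f m) * (chi l n * f n) := by
        simp [dotProduct, sq, Finset.sum_mul_sum]
    _ = ∑ m, ∑ n, (f m * f n) * ∑ l, chi l m * chi l n := by
        rw [Finset.sum_comm]
        refine Finset.sum_congr rfl fun m _ => ?_
        rw [Finset.sum_comm]
        refine Finset.sum_congr rfl fun n _ => ?_
        rw [Finset.mul_sum]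
        exact Finset.sum_congr rfl fun l _ => by ring
    _ = ∑ m, ∑ n, (f m * f n) * (if m = n then (1:ℝ) else 0) := by
        simp only [key]
    _ = ∑ n, f n ^ 2 := by
        refine Finset.sum_congr rfl fun m _ => ?_
        rw [Finset.sum_eq_single m]
        · rw [if_pos rfl, sq, mul_one]
        · intro n _ hn; rw [if_neg (Ne.symm hn), mul_zero]
        · intro hl; exact absurd (Finset.mem_univ m) hl

theorem sgwt_frame_bound_identity {N J : ℕ}
    (lam : Fin N → ℝ) (chi : Fin N → Fin N → ℝ)
    (horth : ∀ i j, chi i ⬝ᵥ chi j = if i = j then (1 : ℝ) else 0)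
    (hpsd : ∀ l, 0 ≤ lam l)
    (h g : ℝ → ℝ) (t : Fin J → ℝ)
    (G : ℝ → ℝ)
    (hG : G = fun x => h x ^ 2 + ∑ τ, g (t τ * x) ^ 2)
    (f : Fin N → ℝ) :
    ((∑ n, (specApply lam chi h f n) ^ 2) +
        ∑ τ, ∑ n, (specApply lam chi (fun x => g (t τ * x)) f n) ^ 2 =
      ∑ l, G (lam l) * (chi l ⬝ᵥ f) ^ 2) ∧
    (∀ A B : ℝ, (∀ l, A ≤ G (lam l) ∧ G (lam l) ≤ B) →
      A * ∑ n, f n ^ 2 ≤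
          (∑ n, (specApply lam chi h f n) ^ 2) +
            ∑ τ, ∑ n, (specApply lam chi (fun x => g (t τ * x)) f n) ^ 2 ∧
        (∑ n, (specApply lam chi h f n) ^ 2) +
            ∑ τ, ∑ n, (specApply lam chi (fun x => g (t τ * x)) f n) ^ 2 ≤
          B * ∑ n, f n ^ 2) := by
  have hmain : (∑ n, (specApply lam chi h f n) ^ 2) +
      ∑ τ, ∑ n, (specApply lam chi (fun x => g (t τ * x)) f n) ^ 2 =
      ∑ l, G (lam l) * (chi l ⬝ᵥ f) ^ 2 := by
    rw [specApply_energy lam chi horth h f]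
    have : ∀ τ : Fin J, (∑ n, (specApply lam chi (fun x => g (t τ * x)) f n) ^ 2)
        = ∑ l, g (t τ * lam l) ^ 2 * (chi l ⬝ᵥ f) ^ 2 :=
      fun τ => specApply_energy lam chi horth _ f
    simp only [this, hG]
    rw [Finset.sum_comm]
    rw [← Finset.sum_add_distrib]
    apply Finset.sum_congr rfl
    intro l _
    rw [add_mul, Finset.sum_mul]
  refine ⟨hmain, fun A B hAB => ?_⟩
  rw [hmain, parseval chi horth f]
  constructor
  · rw [Finset.mul_sum]
    apply Finset.sum_le_sum
    intro l _
    exact mul_le_mul_of_nonneg_right (hAB l).1 (sq_nonneg _)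
  · rw [Finset.mul_sum]
    apply Finset.sum_le_sum
    intro l _
    exact mul_le_mul_of_nonneg_right (hAB l).2 (sq_nonneg _)
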